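/- Let Ω ⊆ ℝ^n and let f : Ω → ℝ be convex. If Ω contains a point in the relative interior of the convex hull of Ω, then the convex roof f̂ is finite at every point of the convex hull (it never equals -∞), giving a real-valued convex extension of f to the convex hull of Ω. -/

import Mathlib

open scoped BigOperators

/-- Jensen-type convexity of `f` on an arbitrary subset `s`. -/
def JConvexOn {E : Type*} [AddCommGroup E] [Module ℝ E] (s : Set E) (f : E → ℝ) : Prop :=
  ∀ (k : ℕ) (x : Fin k → E) (w : Fin k → ℝ),
    (∀ i, x i ∈ s) → (∀ i, 0 ≤ w i) → (∑ i, w i) = 1 →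
    (∑ i, w i • x i) ∈ s →
    f (∑ i, w i • x i) ≤ ∑ i, w i * f (x i)

/-- The set of values `∑ λᵢ f(xᵢ)` over all representations of `x` as a convex
combination `x = ∑ λᵢ xᵢ` of points `xᵢ ∈ Ω`. -/
def roofSet {E : Type*} [AddCommGroup E] [Module ℝ E] (Ω : Set E) (f : E → ℝ) (x : E) :
    Set ℝ :=
  { r | ∃ (k : ℕ) (p : Fin k → E) (w : Fin k → ℝ),
      (∀ i, p i ∈ Ω) ∧ (∀ i, 0 ≤ w i) ∧ (∑ i, w i) = 1 ∧
      (∑ i, w i • p i) = x ∧ r = ∑ i, w i * f (p i) }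

/-- The convex roof of `f`. -/
noncomputable def convexRoof {E : Type*} [AddCommGroup E] [Module ℝ E]
    (Ω : Set E) (f : E → ℝ) (x : E) : ℝ :=
  sInf (roofSet Ω f x)

lemma mem_roofSet_self {E : Type*} [AddCommGroup E] [Module ℝ E] {Ω : Set E} (f : E → ℝ)
    {x : E} (hx : x ∈ Ω) : f x ∈ roofSet Ω f x := by
  refine ⟨1, fun _ => x, fun _ => 1, fun _ => hx, fun _ => zero_le_one, ?_, ?_, ?_⟩ <;> simp

lemma le_of_mem_roofSet {E : Type*} [AddCommGroup E] [Module ℝ E] {Ω : Set E} {f : E → ℝ}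
    (hf : JConvexOn Ω f) {x : E} (hx : x ∈ Ω) {r : ℝ} (hr : r ∈ roofSet Ω f x) : f x ≤ r := by
  obtain ⟨k, p, w, hp, hw, hw1, hrep, hval⟩ := hr
  have := hf k p w hp hw hw1 (hrep ▸ hx)
  rw [hrep] at this
  exact hval ▸ this

lemma roofSet_combo {E : Type*} [AddCommGroup E] [Module ℝ E] {Ω : Set E} {f : E → ℝ}
    {x y : E} {rx ry a b : ℝ} (hrx : rx ∈ roofSet Ω f x) (hry : ry ∈ roofSet Ω f y)
    (ha : 0 ≤ a) (hb : 0 ≤ b) (hab : a + b = 1) :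
    a * rx + b * ry ∈ roofSet Ω f (a • x + b • y) := by
  obtain ⟨k, p, w, hp, hw, hw1, hrep, hval⟩ := hrx
  obtain ⟨l, q, v, hq, hv, hv1, hqrep, hqval⟩ := hry
  refine ⟨k + l, Fin.append p q, Fin.append (fun i => a * w i) (fun i => b * v i),
    ?_, ?_, ?_, ?_, ?_⟩
  · intro i
    refine Fin.addCases (fun i => ?_) (fun i => ?_) i
    · rw [Fin.append_left]; exact hp i
    · rw [Fin.append_right]; exact hq i
  · intro i
    refine Fin.addCases (fun i => ?_) (fun i => ?_) i
    · rw [Fin.append_left]; exact mul_nonneg ha (hw i)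
    · rw [Fin.append_right]; exact mul_nonneg hb (hv i)
  · rw [Fin.sum_univ_add]
    simp only [Fin.append_left, Fin.append_right, ← Finset.mul_sum, hw1, hv1]
    linarith
  · rw [Fin.sum_univ_add]
    simp only [Fin.append_left, Fin.append_right, mul_smul, ← Finset.smul_sum, hrep, hqrep]
  · rw [Fin.sum_univ_add]
    simp only [Fin.append_left, Fin.append_right, mul_assoc, ← Finset.mul_sum, ← hval, ← hqval]

lemma roofSet_nonempty {E : Type*} [AddCommGroup E] [Module ℝ E] {Ω : Set E} (f : E → ℝ)
    {x : E} (hx : x ∈ convexHull ℝ Ω) : (roofSet Ω f x).Nonempty := by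
  have h : convexHull ℝ Ω ⊆ {z | (roofSet Ω f z).Nonempty} := by
    apply convexHull_min
    · intro z hz; exact ⟨f z, mem_roofSet_self f hz⟩
    · intro u hu v hv a b ha hb hab
      obtain ⟨ru, hru⟩ := hu
      obtain ⟨rv, hrv⟩ := hv
      exact ⟨_, roofSet_combo hru hrv ha hb hab⟩
  exact h hx

lemma relint_push {n : ℕ} {s : Set (EuclideanSpace ℝ (Fin n))} {p x : EuclideanSpace ℝ (Fin n)}
    (hp : p ∈ intrinsicInterior ℝ s) (hx : x ∈ s) :
    ∃ t : ℝ, 0 < t ∧ p + t • (p - x) ∈ s := by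
  obtain ⟨q, hq, hqp⟩ := hp
  have hpmem : p ∈ affineSpan ℝ s := hqp ▸ q.2
  have hxmem : x ∈ affineSpan ℝ s := subset_affineSpan ℝ s hx
  have hmem : ∀ t : ℝ, p + t • (p - x) ∈ affineSpan ℝ s := by
    intro t
    have := AffineSubspace.smul_vsub_vadd_mem (affineSpan ℝ s) t hpmem hxmem hpmem
    simpa [vsub_eq_sub, vadd_eq_add, add_comm] using this
  set c : ℝ → affineSpan ℝ s := fun t => ⟨p + t • (p - x), hmem t⟩ with hc
  have hcont : Continuous c := by
    apply Continuous.subtype_mk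
    continuity
  have hc0 : c 0 = q := by
    apply Subtype.ext
    simp [hc, hqp]
  have hopen : IsOpen (c ⁻¹' interior ((↑) ⁻¹' s : Set (affineSpan ℝ s))) :=
    isOpen_interior.preimage hcont
  have h0 : (0 : ℝ) ∈ c ⁻¹' interior ((↑) ⁻¹' s) := by
    simp only [Set.mem_preimage, hc0]; exact hq
  obtain ⟨ε, hε, hball⟩ := Metric.isOpen_iff.mp hopen 0 h0
  refine ⟨ε / 2, by positivity, ?_⟩
  have : c (ε / 2) ∈ interior ((↑) ⁻¹' s : Set (affineSpan ℝ s)) := by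
    apply hball
    rw [Metric.mem_ball, Real.dist_eq, sub_zero]
    rw [abs_of_nonneg (by positivity : (0:ℝ) ≤ ε / 2)]
    linarith
  have := interior_subset this
  simpa [hc] using this

/-- If a convex function's domain `Ω` contains a point of the relative interior of the
convex hull of `Ω`, then the convex roof is finite (bounded below) at every point of the
convex hull, and gives a real-valued convex extension of `f` to the convex hull. -/
theorem convexRoof_finite_of_relint_point {n : ℕ}
    (Ω : Set (EuclideanSpace ℝ (Fin n))) (f : EuclideanSpace ℝ (Fin n) → ℝ)
    (hf : JConvexOn Ω f)
    (hpt : ∃ p, p ∈ Ω ∧ p ∈ intrinsicInterior ℝ (convexHull ℝ Ω)) :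
    (∀ x ∈ convexHull ℝ Ω, (roofSet Ω f x).Nonempty ∧ BddBelow (roofSet Ω f x)) ∧
    ConvexOn ℝ (convexHull ℝ Ω) (convexRoof Ω f) ∧
    ∀ x ∈ Ω, convexRoof Ω f x = f x := by
  obtain ⟨p, hpΩ, hpint⟩ := hpt
  -- part 1
  have h1 : ∀ x ∈ convexHull ℝ Ω, (roofSet Ω f x).Nonempty ∧ BddBelow (roofSet Ω f x) := by
    intro x hx
    refine ⟨roofSet_nonempty f hx, ?_⟩
    obtain ⟨t, ht, hy⟩ := relint_push hpint hx
    set y := p + t • (p - x) with hydef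
    set μ := t / (1 + t) with hμdef
    have h1t : (0:ℝ) < 1 + t := by linarith
    have hμpos : 0 < μ := by positivity
    have hμle : μ ≤ 1 := by
      rw [hμdef, div_le_one h1t]; linarith
    have hpeq : p = μ • x + (1 - μ) • y := by
      rw [hydef, hμdef]
      have h1 : (1:ℝ) + t ≠ 0 := by positivity
      match_scalars <;> field_simp <;> ring
    obtain ⟨ry, hry⟩ := roofSet_nonempty f hy
    refine ⟨(f p - (1 - μ) * ry) / μ, ?_⟩
    intro rx hrx
    have hmem := roofSet_combo (a := μ) (b := 1 - μ) hrx hry (le_of_lt hμpos)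
      (by linarith) (by ring)
    rw [← hpeq] at hmem
    have hle := le_of_mem_roofSet hf hpΩ hmem
    rw [div_le_iff₀ hμpos]
    linarith
  refine ⟨h1, ?_, ?_⟩
  · -- convexity
    refine ⟨convex_convexHull ℝ Ω, ?_⟩
    intro x hx y hy a b ha hb hab
    have hz : a • x + b • y ∈ convexHull ℝ Ω :=
      (convex_convexHull ℝ Ω) hx hy ha hb hab
    obtain ⟨hxne, hxbdd⟩ := h1 x hx
    obtain ⟨hyne, hybdd⟩ := h1 y hy
    obtain ⟨hzne, hzbdd⟩ := h1 _ hz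
    rcases eq_or_lt_of_le ha with ha0 | ha0
    · subst ha0
      have hb1 : b = 1 := by linarith
      subst hb1
      simp
    rcases eq_or_lt_of_le hb with hb0 | hb0
    · subst hb0
      have ha1 : a = 1 := by linarith
      subst ha1
      simp
    have key : ∀ rx ∈ roofSet Ω f x, ∀ ry ∈ roofSet Ω f y,
        convexRoof Ω f (a • x + b • y) ≤ a * rx + b * ry := by
      intro rx hrx ry hry
      exact csInf_le hzbdd (roofSet_combo hrx hry ha hb hab)
    have step : ∀ rx ∈ roofSet Ω f x,
        convexRoof Ω f (a • x + b • y) ≤ a * rx + b * convexRoof Ω f y := by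
      intro rx hrx
      have : (convexRoof Ω f (a • x + b • y) - a * rx) / b ≤ convexRoof Ω f y := by
        apply le_csInf hyne
        intro ry hry
        rw [div_le_iff₀ hb0]
        have := key rx hrx ry hry
        linarith [mul_comm ry b]
      rw [div_le_iff₀ hb0] at this
      nlinarith
    have : (convexRoof Ω f (a • x + b • y) - b * convexRoof Ω f y) / a ≤ convexRoof Ω f x := by
      apply le_csInf hxne
      intro rx hrx
      rw [div_le_iff₀ ha0]
      have := step rx hrx
      nlinarith
    rw [div_le_iff₀ ha0] at this
    simp only [smul_eq_mul]
    nlinarith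
  · -- extension
    intro x hx
    have hx' : x ∈ convexHull ℝ Ω := subset_convexHull ℝ Ω hx
    obtain ⟨hne, hbdd⟩ := h1 x hx'
    exact le_antisymm (csInf_le hbdd (mem_roofSet_self f hx))
      (le_csInf hne fun r hr => le_of_mem_roofSet hf hx hr)
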